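/- In a complete CAT(0) space, every non-empty bounded subset has a unique circumcenter, i.e., a unique point x such that the subset is contained in the closed ball of radius rad(Y) around x, where rad(Y) is the circumradius. -/

import Mathlib

/-- A complete CAT(0) structure on a metric space, given by a midpoint map
satisfying the Bruhat–Tits inequality. -/
structure CatZero (X : Type*) [MetricSpace X] where
  mid : X → X → X
  dist_left : ∀ y z, dist (mid y z) y = dist y z / 2
  dist_right : ∀ y z, dist (mid y z) z = dist y z / 2
  bruhat_tits : ∀ x y z, dist x (mid y z) ^ 2 ≤
    (dist x y ^ 2 + dist x z ^ 2) / 2 - dist y z ^ 2 / 4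

/-- The circumradius of a subset of a metric space. -/
noncomputable def circumradius {X : Type*} [MetricSpace X] (Y : Set X) : ℝ :=
  sInf {r : ℝ | 0 ≤ r ∧ ∃ x : X, Y ⊆ Metric.closedBall x r}

lemma circumradius_nonneg {X : Type*} [MetricSpace X] (Y : Set X) :
    0 ≤ circumradius Y :=
  Real.sInf_nonneg (fun _ hs => hs.1)

lemma bddBelow_radii {X : Type*} [MetricSpace X] (Y : Set X) :
    BddBelow {r : ℝ | 0 ≤ r ∧ ∃ x : X, Y ⊆ Metric.closedBall x r} :=
  ⟨0, fun _ hs => hs.1⟩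

/-- Key estimate from the Bruhat–Tits inequality: if `Y` is covered by two closed
balls, then the distance between their centers is controlled. -/
lemma key_est {X : Type*} [MetricSpace X] (c : CatZero X) (Y : Set X)
    (hne : Y.Nonempty) {x₁ x₂ : X} {a b : ℝ}
    (h1 : Y ⊆ Metric.closedBall x₁ a) (h2 : Y ⊆ Metric.closedBall x₂ b) :
    dist x₁ x₂ ^ 2 ≤ 2 * a ^ 2 + 2 * b ^ 2 - 4 * circumradius Y ^ 2 := by
  set m := c.mid x₁ x₂ with hm
  set t := (a ^ 2 + b ^ 2) / 2 - dist x₁ x₂ ^ 2 / 4 with ht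
  have hyt : ∀ y ∈ Y, dist y m ^ 2 ≤ t := by
    intro y hy
    have hbt := c.bruhat_tits y x₁ x₂
    have h1' : dist y x₁ ^ 2 ≤ a ^ 2 := by
      have := h1 hy
      rw [Metric.mem_closedBall] at this
      nlinarith [dist_nonneg (x := y) (y := x₁)]
    have h2' : dist y x₂ ^ 2 ≤ b ^ 2 := by
      have := h2 hy
      rw [Metric.mem_closedBall] at this
      nlinarith [dist_nonneg (x := y) (y := x₂)]
    rw [ht]
    linarith
  obtain ⟨y0, hy0⟩ := hne
  have ht0 : 0 ≤ t := le_trans (sq_nonneg _) (hyt y0 hy0)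
  have hsub : Y ⊆ Metric.closedBall m (Real.sqrt t) := by
    intro y hy
    rw [Metric.mem_closedBall]
    have := hyt y hy
    nlinarith [Real.sq_sqrt ht0, Real.sqrt_nonneg t,
      dist_nonneg (x := y) (y := m)]
  have hr_le : circumradius Y ≤ Real.sqrt t :=
    csInf_le (bddBelow_radii Y) ⟨Real.sqrt_nonneg t, m, hsub⟩
  have hr0 : 0 ≤ circumradius Y := circumradius_nonneg Y
  have hsq : circumradius Y ^ 2 ≤ t := by
    nlinarith [Real.sq_sqrt ht0]
  rw [ht] at hsq
  linarith

theorem stmt1 {X : Type*} [MetricSpace X] [CompleteSpace X] (c : CatZero X)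
    (Y : Set X) (hne : Y.Nonempty) (hbd : Bornology.IsBounded Y) :
    ∃! z : X, Y ⊆ Metric.closedBall z (circumradius Y) := by
  set S := {r : ℝ | 0 ≤ r ∧ ∃ x : X, Y ⊆ Metric.closedBall x r} with hS
  obtain ⟨y0, hy0⟩ := hne
  have hSne : S.Nonempty := by
    obtain ⟨R, hR⟩ := hbd.subset_closedBall y0
    exact ⟨max R 0, le_max_right _ _, y0,
      hR.trans (Metric.closedBall_subset_closedBall (le_max_left _ _))⟩
  set r := circumradius Y with hr
  have hr0 : 0 ≤ r := circumradius_nonneg Y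
  -- minimizing sequence
  have hseq : ∀ n : ℕ, ∃ x : X, Y ⊆ Metric.closedBall x (r + 1 / (n + 1)) := by
    intro n
    have hpos : (0 : ℝ) < 1 / (n + 1) := by positivity
    have : r < r + 1 / (n + 1) := by linarith
    obtain ⟨s, hsS, hs_lt⟩ := exists_lt_of_csInf_lt hSne this
    obtain ⟨hs0, x, hx⟩ := hsS
    exact ⟨x, hx.trans (Metric.closedBall_subset_closedBall hs_lt.le)⟩
  choose x hx using hseq
  -- Cauchy
  have hdist : ∀ N n m : ℕ, N ≤ n → N ≤ m →
      dist (x n) (x m) ≤ Real.sqrt (4 * (r + 1 / (N + 1)) ^ 2 - 4 * r ^ 2) := by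
    intro N n m hn hm
    have hkey := key_est c Y ⟨y0, hy0⟩ (hx n) (hx m)
    have hεn : 1 / ((n : ℝ) + 1) ≤ 1 / (N + 1) := by
      apply one_div_le_one_div_of_le
      · positivity
      · exact_mod_cast by exact_mod_cast add_le_add_left (Nat.cast_le.mpr hn : (N:ℝ) ≤ n) 1
    have hεm : 1 / ((m : ℝ) + 1) ≤ 1 / (N + 1) := by
      apply one_div_le_one_div_of_le
      · positivity
      · exact_mod_cast by exact_mod_cast add_le_add_left (Nat.cast_le.mpr hm : (N:ℝ) ≤ m) 1
    have hεn0 : (0 : ℝ) < 1 / (n + 1) := by positivity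
    have hεm0 : (0 : ℝ) < 1 / (m + 1) := by positivity
    have hsq : dist (x n) (x m) ^ 2 ≤ 4 * (r + 1 / (N + 1)) ^ 2 - 4 * r ^ 2 := by
      nlinarith
    have h0 : (0 : ℝ) ≤ 4 * (r + 1 / (N + 1)) ^ 2 - 4 * r ^ 2 :=
      le_trans (sq_nonneg _) hsq
    nlinarith [Real.sq_sqrt h0, Real.sqrt_nonneg (4 * (r + 1 / ((N : ℝ) + 1)) ^ 2 - 4 * r ^ 2),
      dist_nonneg (x := x n) (y := x m)]
  have hb0 : Filter.Tendsto
      (fun N : ℕ => Real.sqrt (4 * (r + 1 / (N + 1)) ^ 2 - 4 * r ^ 2))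
      Filter.atTop (nhds 0) := by
    have h1 : Filter.Tendsto (fun N : ℕ => 1 / ((N : ℝ) + 1)) Filter.atTop (nhds 0) :=
      tendsto_one_div_add_atTop_nhds_zero_nat
    have h2 : Filter.Tendsto (fun N : ℕ => 4 * (r + 1 / ((N : ℝ) + 1)) ^ 2 - 4 * r ^ 2)
        Filter.atTop (nhds 0) := by
      have := ((h1.const_add r).pow 2).const_mul 4 |>.sub_const (4 * r ^ 2)
      simpa using this
    have := (Real.continuous_sqrt.tendsto 0).comp h2
    simpa [Function.comp_def] using this
  have hcauchy : CauchySeq x :=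
    cauchySeq_of_le_tendsto_0 _ (fun n m N hn hm => hdist N n m hn hm) hb0
  obtain ⟨z, hz⟩ := cauchySeq_tendsto_of_complete hcauchy
  refine ⟨z, ?_, ?_⟩
  · intro y hy
    rw [Metric.mem_closedBall]
    have h1 : Filter.Tendsto (fun n : ℕ => dist y (x n)) Filter.atTop (nhds (dist y z)) :=
      (Continuous.tendsto (continuous_const.dist continuous_id) z).comp hz
    have h2 : Filter.Tendsto (fun n : ℕ => r + 1 / ((n : ℝ) + 1)) Filter.atTop (nhds r) := by
      have := (tendsto_one_div_add_atTop_nhds_zero_nat).const_add r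
      simpa using this
    refine le_of_tendsto_of_tendsto' h1 h2 fun n => ?_
    have := hx n hy
    rwa [Metric.mem_closedBall] at this
  · intro z' hz'
    have hzY : Y ⊆ Metric.closedBall z (circumradius Y) := by
      intro y hy
      rw [Metric.mem_closedBall]
      have h1 : Filter.Tendsto (fun n : ℕ => dist y (x n)) Filter.atTop (nhds (dist y z)) :=
        (Continuous.tendsto (continuous_const.dist continuous_id) z).comp hz
      have h2 : Filter.Tendsto (fun n : ℕ => r + 1 / ((n : ℝ) + 1)) Filter.atTop (nhds r) := by
        have := (tendsto_one_div_add_atTop_nhds_zero_nat).const_add r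
        simpa using this
      refine le_of_tendsto_of_tendsto' h1 h2 fun n => ?_
      have := hx n hy
      rwa [Metric.mem_closedBall] at this
    have hkey := key_est c Y ⟨y0, hy0⟩ hz' hzY
    have : dist z' z ^ 2 ≤ 0 := by linarith
    have hd : dist z' z = 0 := by
      nlinarith [dist_nonneg (x := z') (y := z)]
    exact dist_eq_zero.mp hd
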